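/- Let ψ₁ : 𝔻 → ℂ be holomorphic with |ψ₁(z)| ≤ 1, ψ₁(z) ≠ 1, and Re((ψ₁(z)+1)/(ψ₁(z)−1)) ≥ Re((z+1)/(z−1)) for all z ∈ 𝔻. Define h₁(z) = (z+1)/(z−1) − (ψ₁(z)+1)/(ψ₁(z)−1) and ψ₂(z) = (h₁(z)+1)/(h₁(z)−1). Then ψ₂ is holomorphic on 𝔻, |ψ₂(z)| ≤ 1, ψ₂(z) ≠ 1 for all z ∈ 𝔻, and (ψ₁(z)+1)/(ψ₁(z)−1) + (ψ₂(z)+1)/(ψ₂(z)−1) = (z+1)/(z−1) for all z ∈ 𝔻. -/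

import Mathlib

open Complex Metric

/-- Given `ψ₁` in the class with `Re((ψ₁+1)/(ψ₁-1)) ≥ Re((z+1)/(z-1))`, the function
`ψ₂ = (h₁+1)/(h₁-1)` with `h₁ = (z+1)/(z-1) - (ψ₁+1)/(ψ₁-1)` is its factorizing partner. -/
theorem stmt_17 (ψ₁ h₁ ψ₂ : ℂ → ℂ)
    (hdiff : DifferentiableOn ℂ ψ₁ (ball (0 : ℂ) 1))
    (hcontr : ∀ z ∈ ball (0 : ℂ) 1, ‖ψ₁ z‖ ≤ 1)
    (hne : ∀ z ∈ ball (0 : ℂ) 1, ψ₁ z ≠ 1)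
    (hineq : ∀ z ∈ ball (0 : ℂ) 1,
      ((z + 1) / (z - 1)).re ≤ ((ψ₁ z + 1) / (ψ₁ z - 1)).re)
    (hh₁ : ∀ z, h₁ z = (z + 1) / (z - 1) - (ψ₁ z + 1) / (ψ₁ z - 1))
    (hψ₂ : ∀ z, ψ₂ z = (h₁ z + 1) / (h₁ z - 1)) :
    DifferentiableOn ℂ ψ₂ (ball (0 : ℂ) 1) ∧
    (∀ z ∈ ball (0 : ℂ) 1, ‖ψ₂ z‖ ≤ 1) ∧
    (∀ z ∈ ball (0 : ℂ) 1, ψ₂ z ≠ 1) ∧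
    ∀ z ∈ ball (0 : ℂ) 1,
      (ψ₁ z + 1) / (ψ₁ z - 1) + (ψ₂ z + 1) / (ψ₂ z - 1) = (z + 1) / (z - 1) := by
  have key : ∀ z ∈ ball (0 : ℂ) 1, (h₁ z).re ≤ 0 := by
    intro z hz
    rw [hh₁]
    have := hineq z hz
    simp only [sub_re]
    linarith
  have hne1 : ∀ z ∈ ball (0 : ℂ) 1, h₁ z - 1 ≠ 0 := by
    intro z hz h
    have h1 := key z hz
    have h2 : (h₁ z - 1).re = 0 := by rw [h]; simp
    simp only [sub_re, one_re] at h2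
    linarith
  have hz1 : ∀ z ∈ ball (0 : ℂ) 1, z - (1 : ℂ) ≠ 0 := by
    intro z hz h
    rw [sub_eq_zero] at h
    subst h
    simp at hz
  have hψne : ∀ z ∈ ball (0 : ℂ) 1, ψ₁ z - 1 ≠ 0 := by
    intro z hz h
    exact hne z hz (by rwa [sub_eq_zero] at h)
  have hh₁diff : DifferentiableOn ℂ h₁ (ball (0 : ℂ) 1) := by
    have : DifferentiableOn ℂ
        (fun z : ℂ => (z + 1) / (z - 1) - (ψ₁ z + 1) / (ψ₁ z - 1)) (ball (0 : ℂ) 1) := by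
      apply DifferentiableOn.sub
      · exact DifferentiableOn.div (by fun_prop) (by fun_prop) (fun z hz => hz1 z hz)
      · exact DifferentiableOn.div (hdiff.add (differentiableOn_const 1))
          (hdiff.sub (differentiableOn_const 1)) (fun z hz => hψne z hz)
    exact this.congr (fun z _ => hh₁ z)
  have hmob : ∀ z ∈ ball (0 : ℂ) 1, (ψ₂ z + 1) / (ψ₂ z - 1) = h₁ z := by
    intro z hz
    rw [hψ₂]
    have h := hne1 z hz
    field_simp
    ring
  refine ⟨?_, ?_, ?_, ?_⟩
  · have : DifferentiableOn ℂ (fun z => (h₁ z + 1) / (h₁ z - 1)) (ball (0 : ℂ) 1) :=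
      DifferentiableOn.div (hh₁diff.add (differentiableOn_const 1))
        (hh₁diff.sub (differentiableOn_const 1)) (fun z hz => hne1 z hz)
    exact this.congr (fun z _ => hψ₂ z)
  · intro z hz
    rw [hψ₂, norm_div]
    have h1 := key z hz
    have h2 : ‖h₁ z + 1‖ ≤ ‖h₁ z - 1‖ := by
      have e1 : (‖h₁ z + 1‖) ^ 2 ≤ (‖h₁ z - 1‖) ^ 2 := by
        rw [Complex.sq_norm, Complex.sq_norm]
        simp only [Complex.normSq_apply, add_re, add_im, sub_re, sub_im, one_re, one_im]
        nlinarith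
      exact (pow_le_pow_iff_left₀ (norm_nonneg _) (norm_nonneg _) two_ne_zero).mp e1
    have h3 : 0 < ‖h₁ z - 1‖ := by
      simpa [norm_pos_iff] using hne1 z hz
    rw [div_le_one h3]
    exact h2
  · intro z hz h
    rw [hψ₂] at h
    have hd := hne1 z hz
    rw [div_eq_one_iff_eq hd] at h
    have : (1 : ℂ) = -1 := by linear_combination h
    norm_num at this
  · intro z hz
    rw [hmob z hz, hh₁ z]
    ring
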